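/- Let G be an infinite non-abelian 2-group (every element has order a power of 2) with a unique element of order 2, and let A be a maximal abelian subgroup of G with at least 8 elements. Then every element of G not belonging to A has order 4, and A is a normal subgroup of index 2 in G. -/

import Mathlib

namespace Stmt12

variable {G : Type*} [Group G]

/-- From `g^(2^k) = 1` and `g ≠ 1`, some 2-power of `g` equals the unique involution. -/
lemma pz_aux (z : G) (huz : ∀ w : G, w * w = 1 → w = 1 ∨ w = z) :
    ∀ k : ℕ, ∀ g : G, g ^ (2:ℕ) ^ k = 1 → g ≠ 1 → ∃ m : ℕ, g ^ (2:ℕ) ^ m = z := by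
  intro k
  induction k with
  | zero => intro g hg hg1; simp at hg; exact absurd hg hg1
  | succ k ih =>
    intro g hg hg1
    by_cases h : g ^ (2:ℕ) ^ k = 1
    · exact ih g h hg1
    · refine ⟨k, ?_⟩
      have h2 : g ^ (2:ℕ) ^ k * g ^ (2:ℕ) ^ k = 1 := by
        rw [← pow_add, ← two_mul, ← pow_succ']
        exact hg
      rcases huz _ h2 with h' | h'
      · exact absurd h' h
      · exact h'

lemma pz (hG : IsPGroup 2 G) (z : G) (huz : ∀ w : G, w * w = 1 → w = 1 ∨ w = z)
    {g : G} (hg1 : g ≠ 1) : ∃ m : ℕ, g ^ (2:ℕ) ^ m = z := by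
  obtain ⟨k, hk⟩ := hG g
  exact pz_aux z huz k g hk hg1

/-- conjugation by a commuting element is trivial -/
lemma conj_self {s x : G} (h : s * x = x * s) : s * x * s⁻¹ = x := by rw [h]; group

/-- Key lemma E′: square roots of an element of order ≥ 4 are unique up to `z`. -/
lemma keyE (hG : IsPGroup 2 G) (z : G) (hz1 : z ≠ 1) (hzz : z * z = 1)
    (hzc : ∀ g : G, z * g = g * z)
    (huz : ∀ w : G, w * w = 1 → w = 1 ∨ w = z)
    {s t w : G} (hs : s * s = w) (ht : t * t = w) (hw : w * w ≠ 1) :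
    t = s ∨ t = s * z := by
  have hzinv : z⁻¹ = z := inv_eq_of_mul_eq_one_right hzz
  set u : G := s * t⁻¹ with hu
  have hsw : Commute s w := by rw [← hs]; exact (Commute.refl s).mul_right (Commute.refl s)
  have htw : Commute t w := by rw [← ht]; exact (Commute.refl t).mul_right (Commute.refl t)
  have huw : Commute u w := hsw.mul_left htw.inv_left
  have hconj : s * u * s⁻¹ = u⁻¹ := by
    have : s * (s * t⁻¹) * s⁻¹ = (s * s) * t⁻¹ * s⁻¹ := by group
    rw [hu, this, hs]
    have : w * t⁻¹ = t⁻¹ * w := htw.inv_left.symm.eq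
    rw [this, ← ht]
    group
  by_cases hu1 : u = 1
  · left
    have : s * t⁻¹ = 1 := hu1
    have := mul_inv_eq_one.mp this
    exact this.symm
  by_cases huzz : u = z
  · right
    have h1 : s * t⁻¹ = z := huzz
    have : t⁻¹ = s⁻¹ * z := by rw [← h1]; group
    calc t = (t⁻¹)⁻¹ := by group
      _ = (s⁻¹ * z)⁻¹ := by rw [this]
      _ = z⁻¹ * s := by group
      _ = z * s := by rw [hzinv]
      _ = s * z := hzc s
  -- contradiction branch
  exfalso
  obtain ⟨m, hm⟩ := pz hG z huz hu1
  cases m with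
  | zero => simp at hm; exact huzz hm
  | succ j =>
    set v : G := u ^ (2:ℕ) ^ j with hv
    have hv2 : v * v = z := by
      rw [hv, ← pow_add, ← two_mul, ← pow_succ']; exact hm
    have hwne1 : w ≠ 1 := fun h => hw (by rw [h, one_mul])
    obtain ⟨n, hn⟩ := pz hG z huz hwne1
    cases n with
    | zero =>
      simp at hn
      exact hw (by rw [hn, hzz])
    | succ l =>
      set i0 : G := w ^ (2:ℕ) ^ l with hi0
      have hi2 : i0 * i0 = z := by
        rw [hi0, ← pow_add, ← two_mul, ← pow_succ']; exact hn
      have hvi : Commute v i0 := (huw.pow_pow _ _)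
      have h1 : (v * i0) * (v * i0) = 1 := by
        calc (v * i0) * (v * i0) = v * (i0 * v) * i0 := by group
          _ = v * (v * i0) * i0 := by rw [hvi.symm.eq]
          _ = (v * v) * (i0 * i0) := by group
          _ = z * z := by rw [hv2, hi2]
          _ = 1 := hzz
      have hsv : s * v * s⁻¹ = v⁻¹ := by
        have : s * u ^ (2:ℕ) ^ j * s⁻¹ = (s * u * s⁻¹) ^ (2:ℕ) ^ j := by
          rw [conj_pow]
        rw [hv, this, hconj, inv_pow]
      have hsv' : s * v * s⁻¹ = v := by
        have hsi : Commute s i0 := hsw.pow_right _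
        rcases huz _ h1 with h' | h'
        · -- v = i0⁻¹
          have hvv : v = i0⁻¹ := eq_inv_of_mul_eq_one_left h'
          rw [hvv]
          exact conj_self hsi.inv_right.eq
        · -- v * i0 = z, so v = z * i0⁻¹
          have hvv : v = z * i0⁻¹ := by
            have h2 : v * i0 * i0⁻¹ = z * i0⁻¹ := by rw [h']
            simpa using h2
          rw [hvv]
          have hsz : Commute s z := (hzc s).symm
          exact conj_self (hsz.mul_right hsi.inv_right).eq
      have hvinv : v⁻¹ = v := by rw [← hsv, hsv']
      have hv1 : v * v = 1 := by
        nth_rewrite 1 [← hvinv]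
        exact inv_mul_cancel v
      rw [hv2] at hv1
      exact hz1 hv1


set_option maxHeartbeats 1000000 in
/-- Core contradiction: there are no elements `a, p` of order 8 whose squares `i, q`
anticommute with `(q*i)^2 = z`. -/
lemma core (hG : IsPGroup 2 G) (z : G) (hz1 : z ≠ 1) (hzz : z * z = 1)
    (hzc : ∀ g : G, z * g = g * z)
    (huz : ∀ w : G, w * w = 1 → w = 1 ∨ w = z)
    {a p : G} (ha : (a*a)*(a*a) = z) (hp : (p*p)*(p*p) = z)
    (hc2 : ((p*p)*(a*a)) * ((p*p)*(a*a)) = z)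
    (hnc : (p*p)*(a*a) ≠ (a*a)*(p*p)) : False := by
  obtain ⟨i, hi⟩ : ∃ x : G, x = a*a := ⟨_, rfl⟩
  obtain ⟨q, hq⟩ : ∃ x : G, x = p*p := ⟨_, rfl⟩
  rw [← hi] at ha
  rw [← hq] at hp
  rw [← hq, ← hi] at hc2 hnc
  -- basic inverse facts
  have hzv : z⁻¹ = z := inv_eq_of_mul_eq_one_right hzz
  have hiv : i⁻¹ = i*z := inv_eq_of_mul_eq_one_right (by
    calc i*(i*z) = (i*i)*z := by group
      _ = z*z := by rw [ha]
      _ = 1 := hzz)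
  have hqv : q⁻¹ = q*z := inv_eq_of_mul_eq_one_right (by
    calc q*(q*z) = (q*q)*z := by group
      _ = z*z := by rw [hp]
      _ = 1 := hzz)
  -- (1) i*q = z*(q*i)
  have hiq : i*q = z*(q*i) := by
    calc i*q = q⁻¹ * ((q*i)*(q*i)) * i⁻¹ := by group
      _ = q⁻¹ * z * i⁻¹ := by rw [hc2]
      _ = (q*z) * z * (i*z) := by rw [hqv, hiv]
      _ = q * (z*z) * (i*z) := by group
      _ = q * 1 * (i*z) := by rw [hzz]
      _ = (q*i)*z := by group
      _ = z*(q*i) := (hzc _).symm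
  -- (2) i*(q*i) = q
  have hiqi : i*(q*i) = q := by
    calc i*(q*i) = (i*q)*i := by group
      _ = (z*(q*i))*i := by rw [hiq]
      _ = z*(q*(i*i)) := by group
      _ = z*(q*z) := by rw [ha]
      _ = z*(z*q) := by rw [← hzc q]
      _ = (z*z)*q := by group
      _ = 1*q := by rw [hzz]
      _ = q := one_mul q
  -- (3) (q*i)*q = i
  have hqiq : (q*i)*q = i := by
    calc (q*i)*q = q*(i*q) := by group
      _ = q*(z*(q*i)) := by rw [hiq]
      _ = (q*z)*(q*i) := by group
      _ = (z*q)*(q*i) := by rw [← hzc q]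
      _ = z*((q*q)*i) := by group
      _ = z*(z*i) := by rw [hp]
      _ = (z*z)*i := by group
      _ = 1*i := by rw [hzz]
      _ = i := one_mul i
  -- (4) i*q*i⁻¹ = z*q
  have hiqc : i*q*i⁻¹ = z*q := by
    calc i*q*i⁻¹ = (i*q)*i⁻¹ := by group
      _ = (z*(q*i))*i⁻¹ := by rw [hiq]
      _ = z*q := by group
  -- (4') q*i*q⁻¹ = z*i
  have hqic : q*i*q⁻¹ = z*i := by
    calc q*i*q⁻¹ = ((q*i)*q)*(q⁻¹*q⁻¹) := by group
      _ = i*(q⁻¹*q⁻¹) := by rw [hqiq]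
      _ = i*(q*q)⁻¹ := by group
      _ = i*z⁻¹ := by rw [hp]
      _ = i*z := by rw [hzv]
      _ = z*i := (hzc i).symm
  have hzqz : (z*q)*(z*q) = z := by
    calc (z*q)*(z*q) = z*((q*z)*q) := by group
      _ = z*((z*q)*q) := by rw [← hzc q]
      _ = (z*z)*(q*q) := by group
      _ = 1*z := by rw [hzz, hp]
      _ = z := one_mul z
  have hziz : (z*i)*(z*i) = z := by
    calc (z*i)*(z*i) = z*((i*z)*i) := by group
      _ = z*((z*i)*i) := by rw [← hzc i]
      _ = (z*z)*(i*i) := by group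
      _ = 1*z := by rw [hzz, ha]
      _ = z := one_mul z
  -- R3 : i*p*i⁻¹ = p⁻¹ (via keyE and killing the twisted branch)
  have hR3 : i*p*i⁻¹ = p⁻¹ := by
    have hs : p⁻¹*p⁻¹ = z*q := by
      calc p⁻¹*p⁻¹ = (p*p)⁻¹ := by group
        _ = q⁻¹ := by rw [← hq]
        _ = q*z := hqv
        _ = z*q := (hzc q).symm
    have ht : (i*p*i⁻¹)*(i*p*i⁻¹) = z*q := by
      calc (i*p*i⁻¹)*(i*p*i⁻¹) = i*(p*p)*i⁻¹ := by group
        _ = i*q*i⁻¹ := by rw [← hq]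
        _ = z*q := hiqc
    have hw : (z*q)*(z*q) ≠ 1 := by
      intro h; rw [hzqz] at h; exact hz1 h
    rcases keyE hG z hz1 hzz hzc huz hs ht hw with h' | h'
    · exact h'
    · -- twisted branch : i*p*i⁻¹ = p⁻¹*z, contradiction
      exfalso
      have hip1 : i*p = (p⁻¹*z)*i := by
        calc i*p = (i*p*i⁻¹)*i := by group
          _ = (p⁻¹*z)*i := by rw [h']
      have h2 : (i*p)*(i*p) = 1 := by
        calc (i*p)*(i*p) = ((p⁻¹*z)*i)*(i*p) := by rw [hip1]
          _ = p⁻¹*(z*(i*i))*p := by group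
          _ = p⁻¹*(z*z)*p := by rw [ha]
          _ = p⁻¹*1*p := by rw [hzz]
          _ = 1 := by group
      have hqz : q = z := by
        rcases huz _ h2 with h3 | h3
        · have hpv : p = i⁻¹ := by
            calc p = i⁻¹*(i*p) := by group
              _ = i⁻¹*1 := by rw [h3]
              _ = i⁻¹ := mul_one _
          calc q = p*p := hq
            _ = i⁻¹*i⁻¹ := by rw [hpv]
            _ = (i*i)⁻¹ := by group
            _ = z⁻¹ := by rw [ha]
            _ = z := hzv
        · have hpv : p = i⁻¹*z := by
            calc p = i⁻¹*(i*p) := by group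
              _ = i⁻¹*z := by rw [h3]
          calc q = p*p := hq
            _ = (i⁻¹*z)*(i⁻¹*z) := by rw [hpv]
            _ = i⁻¹*(z*i⁻¹)*z := by group
            _ = i⁻¹*(i⁻¹*z)*z := by rw [hzc i⁻¹]
            _ = (i*i)⁻¹*(z*z) := by group
            _ = z⁻¹*1 := by rw [ha, hzz]
            _ = z := by rw [hzv, mul_one]
      apply hnc
      calc q*i = z*i := by rw [hqz]
        _ = i*z := hzc i
        _ = i*q := by rw [hqz]
  -- consequences of R3
  have hip : i*p = p⁻¹*i := by
    calc i*p = (i*p*i⁻¹)*i := by group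
      _ = p⁻¹*i := by rw [hR3]
  have hpi : p*i = i*p⁻¹ := by
    calc p*i = (p*(i*p))*p⁻¹ := by group
      _ = (p*(p⁻¹*i))*p⁻¹ := by rw [hip]
      _ = i*p⁻¹ := by group
  have hpip : p*i*p⁻¹ = q*i := by
    calc p*i*p⁻¹ = (p*i)*p⁻¹ := by group
      _ = (i*p⁻¹)*p⁻¹ := by rw [hpi]
      _ = i*(p*p)⁻¹ := by group
      _ = i*q⁻¹ := by rw [← hq]
      _ = i*(q*z) := by rw [hqv]
      _ = (i*q)*z := by group
      _ = (z*(q*i))*z := by rw [hiq]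
      _ = z*((q*i)*z) := by group
      _ = z*(z*(q*i)) := by rw [← hzc (q*i)]
      _ = (z*z)*(q*i) := by group
      _ = 1*(q*i) := by rw [hzz]
      _ = q*i := one_mul _
  -- R4 : q*a*q⁻¹ = a⁻¹
  have hR4 : q*a*q⁻¹ = a⁻¹ := by
    have hs : a⁻¹*a⁻¹ = z*i := by
      calc a⁻¹*a⁻¹ = (a*a)⁻¹ := by group
        _ = i⁻¹ := by rw [← hi]
        _ = i*z := hiv
        _ = z*i := (hzc i).symm
    have ht : (q*a*q⁻¹)*(q*a*q⁻¹) = z*i := by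
      calc (q*a*q⁻¹)*(q*a*q⁻¹) = q*(a*a)*q⁻¹ := by group
        _ = q*i*q⁻¹ := by rw [← hi]
        _ = z*i := hqic
    have hw : (z*i)*(z*i) ≠ 1 := by
      intro h; rw [hziz] at h; exact hz1 h
    rcases keyE hG z hz1 hzz hzc huz hs ht hw with h' | h'
    · exact h'
    · exfalso
      have h2 : (q*a)*(q*a) = 1 := by
        calc (q*a)*(q*a) = (q*a*q⁻¹)*((q*q)*a) := by group
          _ = (a⁻¹*z)*((q*q)*a) := by rw [h']
          _ = (a⁻¹*z)*(z*a) := by rw [hp]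
          _ = a⁻¹*((z*z)*a) := by group
          _ = a⁻¹*(1*a) := by rw [hzz]
          _ = 1 := by group
      rcases huz _ h2 with h3 | h3
      · have hqv' : q = a⁻¹ := by
          calc q = (q*a)*a⁻¹ := by group
            _ = 1*a⁻¹ := by rw [h3]
            _ = a⁻¹ := one_mul _
        apply hnc
        calc q*i = a⁻¹*(a*a) := by rw [hqv', hi]
          _ = a := by group
          _ = (a*a)*a⁻¹ := by group
          _ = i*q := by rw [← hi, ← hqv']
      · have hqv' : q = z*a⁻¹ := by
          calc q = (q*a)*a⁻¹ := by group
            _ = z*a⁻¹ := by rw [h3]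
        apply hnc
        have e1 : q*i = z*a := by
          calc q*i = (z*a⁻¹)*(a*a) := by rw [hqv', hi]
            _ = z*a := by group
        have e2 : i*q = z*a := by
          calc i*q = (a*a)*(z*a⁻¹) := by rw [hqv', hi]
            _ = (a*a)*(a⁻¹*z) := by rw [hzc a⁻¹]
            _ = a*z := by group
            _ = z*a := (hzc a).symm
        rw [e1, e2]
  -- consequences of R4
  have hqa : q*a = a⁻¹*q := by
    calc q*a = (q*a*q⁻¹)*q := by group
      _ = a⁻¹*q := by rw [hR4]
  have haq : a*q = q*a⁻¹ := by
    calc a*q = (a*(q*a))*a⁻¹ := by group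
      _ = (a*(a⁻¹*q))*a⁻¹ := by rw [hqa]
      _ = q*a⁻¹ := by group
  have haqa : a*q*a⁻¹ = z*(q*i) := by
    calc a*q*a⁻¹ = (a*q)*a⁻¹ := by group
      _ = (q*a⁻¹)*a⁻¹ := by rw [haq]
      _ = q*(a*a)⁻¹ := by group
      _ = q*i⁻¹ := by rw [← hi]
      _ = q*(i*z) := by rw [hiv]
      _ = (q*i)*z := by group
      _ = z*(q*i) := (hzc (q*i)).symm
  have hai : a*i = i*a := by rw [hi]; group
  have hia : i*a = a*i := hai.symm
  have haca : a*(q*i)*a⁻¹ = q := by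
    calc a*(q*i)*a⁻¹ = (a*q*a⁻¹)*(a*i*a⁻¹) := by group
      _ = (z*(q*i))*(a*i*a⁻¹) := by rw [haqa]
      _ = (z*(q*i))*i := by rw [conj_self hai]
      _ = z*(q*(i*i)) := by group
      _ = z*(q*z) := by rw [ha]
      _ = z*(z*q) := by rw [← hzc q]
      _ = (z*z)*q := by group
      _ = 1*q := by rw [hzz]
      _ = q := one_mul _
  -- b := p*a*p⁻¹
  obtain ⟨b, hb⟩ : ∃ x : G, x = p*a*p⁻¹ := ⟨_, rfl⟩
  have hbb : b*b = q*i := by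
    calc b*b = p*(a*a)*p⁻¹ := by rw [hb]; group
      _ = p*i*p⁻¹ := by rw [← hi]
      _ = q*i := hpip
  have hpa : p*a = b*p := by rw [hb]; group
  -- E' for a*b*a⁻¹, common square q
  have hrt3 : (a*b*a⁻¹)*(a*b*a⁻¹) = q := by
    calc (a*b*a⁻¹)*(a*b*a⁻¹) = a*(b*b)*a⁻¹ := by group
      _ = a*(q*i)*a⁻¹ := by rw [hbb]
      _ = q := haca
  have hwq : q*q ≠ 1 := by intro h; rw [hp] at h; exact hz1 h
  have hppq : p*p = q := hq.symm
  obtain ⟨ζ, hz1', hzeta⟩ : ∃ ζ : G, (a*b*a⁻¹ = p*ζ) ∧ (ζ = 1 ∨ ζ = z) := by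
    rcases keyE hG z hz1 hzz hzc huz hppq hrt3 hwq with h' | h'
    · exact ⟨1, by rw [h', mul_one], Or.inl rfl⟩
    · exact ⟨z, h', Or.inr rfl⟩
  have hζc : ∀ g : G, ζ*g = g*ζ := by
    rcases hzeta with h | h
    · intro g; rw [h, one_mul, mul_one]
    · intro g; rw [h]; exact hzc g
  have hζζ : ζ*ζ = 1 := by
    rcases hzeta with h | h
    · rw [h, one_mul]
    · rw [h]; exact hzz
  have hab : a*b = p*(ζ*a) := by
    calc a*b = (a*b*a⁻¹)*a := by group
      _ = (p*ζ)*a := by rw [hz1']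
      _ = p*(ζ*a) := by group
  -- (a*p)² = ζ*((p*(p*p))*a⁻¹)
  have hS2 : (a*p)*(a*p) = ζ*((p*(p*p))*a⁻¹) := by
    calc (a*p)*(a*p) = a*((p*a)*p) := by group
      _ = a*((b*p)*p) := by rw [hpa]
      _ = (a*b)*(p*p) := by group
      _ = (p*(ζ*a))*(p*p) := by rw [hab]
      _ = (p*(ζ*a))*q := by rw [hppq]
      _ = p*(ζ*(a*q)) := by group
      _ = p*(ζ*(q*a⁻¹)) := by rw [haq]
      _ = (p*ζ)*(q*a⁻¹) := by group
      _ = (ζ*p)*(q*a⁻¹) := by rw [← hζc p]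
      _ = (ζ*p)*((p*p)*a⁻¹) := by rw [hq]
      _ = ζ*((p*(p*p))*a⁻¹) := by group
  have ha'p3 : a⁻¹*(p*(p*p)) = q*(a*p) := by
    calc a⁻¹*(p*(p*p)) = a⁻¹*((p*p)*p) := by group
      _ = a⁻¹*(q*p) := by rw [← hq]
      _ = (a⁻¹*q)*p := by group
      _ = (q*a)*p := by rw [← hqa]
      _ = q*(a*p) := by group
  have hp3q : (p*(p*p))*q = z*p := by
    calc (p*(p*p))*q = p*((p*p)*q) := by group
      _ = p*(q*q) := by rw [← hq]
      _ = p*z := by rw [hp]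
      _ = z*p := by rw [← hzc p]
  -- Y := a*p*a⁻¹ = ζ*(p⁻¹*(a*p))
  have hipinv : i*p⁻¹*i⁻¹ = p := by
    calc i*p⁻¹*i⁻¹ = (i*p*i⁻¹)⁻¹ := by group
      _ = (p⁻¹)⁻¹ := by rw [hR3]
      _ = p := by group
  have hibi : i*b*i⁻¹ = p⁻¹*(a*p) := by
    calc i*b*i⁻¹ = (i*p*i⁻¹)*((i*a*i⁻¹)*(i*p⁻¹*i⁻¹)) := by rw [hb]; group
      _ = p⁻¹*((i*a*i⁻¹)*(i*p⁻¹*i⁻¹)) := by rw [hR3]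
      _ = p⁻¹*(a*(i*p⁻¹*i⁻¹)) := by rw [conj_self hia]
      _ = p⁻¹*(a*p) := by rw [hipinv]
  have hpval : p = (a*b*a⁻¹)*ζ := by
    calc p = p*(ζ*ζ) := by rw [hζζ, mul_one]
      _ = (p*ζ)*ζ := by group
      _ = (a*b*a⁻¹)*ζ := by rw [hz1']
  have hY : a*p*a⁻¹ = ζ*(p⁻¹*(a*p)) := by
    calc a*p*a⁻¹ = a*((a*b*a⁻¹)*ζ)*a⁻¹ := by rw [← hpval]
      _ = (a*(a*b*a⁻¹))*(ζ*a⁻¹) := by group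
      _ = (a*(a*b*a⁻¹))*(a⁻¹*ζ) := by rw [hζc a⁻¹]
      _ = ((a*a)*b*(a*a)⁻¹)*ζ := by group
      _ = (i*b*i⁻¹)*ζ := by rw [← hi]
      _ = (p⁻¹*(a*p))*ζ := by rw [hibi]
      _ = ζ*(p⁻¹*(a*p)) := by rw [← hζc (p⁻¹*(a*p))]
  -- the fourth power
  have hS4 : ((a*p)*(a*p))*((a*p)*(a*p)) = (z*ζ)*(a*p) := by
    calc ((a*p)*(a*p))*((a*p)*(a*p))
        = (ζ*((p*(p*p))*a⁻¹))*(ζ*((p*(p*p))*a⁻¹)) := by rw [hS2]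
      _ = ζ*((((p*(p*p))*a⁻¹)*ζ)*((p*(p*p))*a⁻¹)) := by group
      _ = ζ*((ζ*((p*(p*p))*a⁻¹))*((p*(p*p))*a⁻¹)) := by rw [← hζc ((p*(p*p))*a⁻¹)]
      _ = (ζ*ζ)*(((p*(p*p))*a⁻¹)*((p*(p*p))*a⁻¹)) := by group
      _ = 1*(((p*(p*p))*a⁻¹)*((p*(p*p))*a⁻¹)) := by rw [hζζ]
      _ = (p*(p*p))*((a⁻¹*(p*(p*p)))*a⁻¹) := by group
      _ = (p*(p*p))*((q*(a*p))*a⁻¹) := by rw [ha'p3]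
      _ = ((p*(p*p))*q)*(a*p*a⁻¹) := by group
      _ = (z*p)*(a*p*a⁻¹) := by rw [hp3q]
      _ = (z*p)*(ζ*(p⁻¹*(a*p))) := by rw [hY]
      _ = z*((p*ζ)*(p⁻¹*(a*p))) := by group
      _ = z*((ζ*p)*(p⁻¹*(a*p))) := by rw [← hζc p]
      _ = z*(ζ*(a*p)) := by group
      _ = (z*ζ)*(a*p) := by group
  have hcube : (a*p)*((a*p)*(a*p)) = z*ζ := by
    have h' : ((a*p)*((a*p)*(a*p)))*(a*p) = (z*ζ)*(a*p) := by
      calc ((a*p)*((a*p)*(a*p)))*(a*p) = ((a*p)*(a*p))*((a*p)*(a*p)) := by group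
        _ = (z*ζ)*(a*p) := hS4
    exact mul_right_cancel h'
  have hsix : ((a*p)*((a*p)*(a*p)))*((a*p)*((a*p)*(a*p))) = 1 := by
    rw [hcube]
    calc (z*ζ)*(z*ζ) = z*((ζ*z)*ζ) := by group
      _ = z*((z*ζ)*ζ) := by rw [hζc z]
      _ = (z*z)*(ζ*ζ) := by group
      _ = 1*1 := by rw [hzz, hζζ]
      _ = 1 := one_mul _
  have hpow6 : (a*p)^(6:ℕ) = 1 := by
    have h' : (a*p)^(6:ℕ) = ((a*p)*((a*p)*(a*p)))*((a*p)*((a*p)*(a*p))) := by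
      rw [show (6:ℕ) = 3+3 from rfl, pow_add, show (3:ℕ) = 2+1 from rfl, pow_add,
        pow_two, pow_one]
      group
    rw [h', hsix]
  have horder : orderOf (a*p) ∣ 6 := orderOf_dvd_of_pow_eq_one hpow6
  haveI : Fact (Nat.Prime 2) := ⟨Nat.prime_two⟩
  obtain ⟨k, hk⟩ := (IsPGroup.iff_orderOf.mp hG) (a*p)
  have hdvd : (2:ℕ)^k ∣ 6 := by rw [hk] at horder; exact horder
  have hk1 : k ≤ 1 := by
    by_contra hcon
    push_neg at hcon
    have h4 : (2:ℕ)^2 ∣ 2^k := pow_dvd_pow 2 hcon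
    have : (4:ℕ) ∣ 6 := by
      calc (4:ℕ) = 2^2 := by norm_num
        _ ∣ 2^k := h4
        _ ∣ 6 := hdvd
    norm_num at this
  have h2 : (a*p)^(2:ℕ) = 1 := by
    apply orderOf_dvd_iff_pow_eq_one.mp
    calc orderOf (a*p) = 2^k := hk
      _ ∣ 2^1 := pow_dvd_pow 2 hk1
      _ = 2 := by norm_num
  have h2' : (a*p)*(a*p) = 1 := by
    rw [← pow_two, h2]
  rcases huz _ h2' with h3 | h3
  · have hpv : p = a⁻¹ := by
      calc p = a⁻¹*(a*p) := by group
        _ = a⁻¹*1 := by rw [h3]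
        _ = a⁻¹ := mul_one _
    apply hnc
    calc q*i = (p*p)*(a*a) := by rw [hq, hi]
      _ = (a⁻¹*a⁻¹)*(a*a) := by rw [hpv]
      _ = (a*a)*(a⁻¹*a⁻¹) := by group
      _ = i*q := by rw [hi, hq, hpv]
  · have hpv : p = a⁻¹*z := by
      calc p = a⁻¹*(a*p) := by group
        _ = a⁻¹*z := by rw [h3]
    apply hnc
    have e1 : q*i = 1 := by
      calc q*i = (p*p)*(a*a) := by rw [hq, hi]
        _ = ((a⁻¹*z)*(a⁻¹*z))*(a*a) := by rw [hpv]
        _ = a⁻¹*((z*a⁻¹)*(z*(a*a))) := by group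
        _ = a⁻¹*((a⁻¹*z)*(z*(a*a))) := by rw [hzc a⁻¹]
        _ = (a⁻¹*a⁻¹)*((z*z)*(a*a)) := by group
        _ = (a⁻¹*a⁻¹)*(1*(a*a)) := by rw [hzz]
        _ = 1 := by group
    have e2 : i*q = 1 := by
      calc i*q = (a*a)*((a⁻¹*z)*(a⁻¹*z)) := by rw [hq, hi, hpv]
        _ = (a*a)*(a⁻¹*((z*a⁻¹)*z)) := by group
        _ = (a*a)*(a⁻¹*((a⁻¹*z)*z)) := by rw [hzc a⁻¹]
        _ = ((a*a)*(a⁻¹*a⁻¹))*(z*z) := by group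
        _ = ((a*a)*(a⁻¹*a⁻¹))*1 := by rw [hzz]
        _ = 1 := by group
    rw [e1, e2]

/-- SQ4: the squares of any two order-8 elements commute. -/
lemma sq4 (hG : IsPGroup 2 G) (z : G) (hz1 : z ≠ 1) (hzz : z * z = 1)
    (hzc : ∀ g : G, z * g = g * z)
    (huz : ∀ w : G, w * w = 1 → w = 1 ∨ w = z)
    {a p : G} (ha0 : (a*a)*(a*a) = z) (hp0 : (p*p)*(p*p) = z) :
    (p*p)*(a*a) = (a*a)*(p*p) := by
  by_contra hnc
  obtain ⟨i, hi⟩ : ∃ x : G, x = a*a := ⟨_, rfl⟩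
  obtain ⟨q, hq⟩ : ∃ x : G, x = p*p := ⟨_, rfl⟩
  have ha : i*i = z := by rw [hi]; exact ha0
  have hp : q*q = z := by rw [hq]; exact hp0
  rw [← hq, ← hi] at hnc
  have hzv : z⁻¹ = z := inv_eq_of_mul_eq_one_right hzz
  have hiv : i⁻¹ = i*z := inv_eq_of_mul_eq_one_right (by
    calc i*(i*z) = (i*i)*z := by group
      _ = z*z := by rw [ha]
      _ = 1 := hzz)
  have hqv : q⁻¹ = q*z := inv_eq_of_mul_eq_one_right (by
    calc q*(q*z) = (q*q)*z := by group
      _ = z*z := by rw [hp]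
      _ = 1 := hzz)
  obtain ⟨c, hc⟩ : ∃ x : G, x = q*i := ⟨_, rfl⟩
  have hc1 : c ≠ 1 := by
    intro h
    apply hnc
    have hq' : q = i⁻¹ := by
      calc q = (q*i)*i⁻¹ := by group
        _ = c*i⁻¹ := by rw [← hc]
        _ = 1*i⁻¹ := by rw [h]
        _ = i⁻¹ := one_mul _
    rw [hq']; group
  obtain ⟨m, hm⟩ := pz hG z huz hc1
  have hcinv : c⁻¹ = i*q := by
    calc c⁻¹ = i⁻¹*q⁻¹ := by rw [hc]; group
      _ = (i*z)*(q*z) := by rw [hiv, hqv]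
      _ = i*((z*q)*z) := by group
      _ = i*((q*z)*z) := by rw [hzc q]
      _ = (i*q)*(z*z) := by group
      _ = (i*q)*1 := by rw [hzz]
      _ = i*q := mul_one _
  have hconj : i*c*i⁻¹ = c⁻¹ := by
    calc i*c*i⁻¹ = i*(q*i)*i⁻¹ := by rw [hc]
      _ = i*q := by group
      _ = c⁻¹ := hcinv.symm
  have hconjn : ∀ n : ℕ, i*(c^n)*i⁻¹ = (c^n)⁻¹ := by
    intro n
    calc i*(c^n)*i⁻¹ = (i*c*i⁻¹)^n := by rw [conj_pow]
      _ = (c⁻¹)^n := by rw [hconj]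
      _ = (c^n)⁻¹ := by rw [inv_pow]
  have ha' : (a*a)*(a*a) = z := ha0
  have hp' : (p*p)*(p*p) = z := hp0
  cases m with
  | zero =>
    have hcz : c = z := by simpa using hm
    apply hnc
    have h1 : q*i = z := by rw [← hc, hcz]
    have h2 : i*q = z := by
      calc i*q = c⁻¹ := hcinv.symm
        _ = z⁻¹ := by rw [hcz]
        _ = z := hzv
    rw [h1, h2]
  | succ m' => cases m' with
    | zero =>
      have hcc : c*c = z := by
        have hm' : c^(2:ℕ) = z := by simpa using hm
        rw [pow_two] at hm'; exact hm'
      have hc2' : ((p*p)*(a*a))*((p*p)*(a*a)) = z := by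
        rw [← hi, ← hq, ← hc]; exact hcc
      have hnc' : (p*p)*(a*a) ≠ (a*a)*(p*p) := by
        rw [← hi, ← hq]; exact hnc
      exact core hG z hz1 hzz hzc huz ha' hp' hc2' hnc'
    | succ m'' =>
      obtain ⟨e, he⟩ : ∃ x : G, x = c^((2:ℕ)^m'') := ⟨_, rfl⟩
      have hee : e*e = c^((2:ℕ)^(m''+1)) := by
        rw [he, ← pow_add, ← two_mul, ← pow_succ']
      have hd2 : (e*e)*(e*e) = z := by
        rw [hee, ← pow_add, ← two_mul, ← pow_succ']
        exact hm
      have hconj_d : i*(e*e)*i⁻¹ = (e*e)⁻¹ := by rw [hee]; exact hconjn _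
      have hid : i*(e*e) = (e*e)⁻¹*i := by
        calc i*(e*e) = (i*(e*e)*i⁻¹)*i := by group
          _ = (e*e)⁻¹*i := by rw [hconj_d]
      have hc2' : ((e*e)*(a*a))*((e*e)*(a*a)) = z := by
        rw [← hi]
        calc ((e*e)*i)*((e*e)*i) = (e*e)*((i*(e*e))*i) := by group
          _ = (e*e)*(((e*e)⁻¹*i)*i) := by rw [hid]
          _ = i*i := by group
          _ = z := ha
      have hnc' : (e*e)*(a*a) ≠ (a*a)*(e*e) := by
        rw [← hi]
        intro hcon
        have h1 : (e*e)*i = (e*e)⁻¹*i := by rw [hcon, hid]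
        have h2 : e*e = (e*e)⁻¹ := mul_right_cancel h1
        have h3 : (e*e)*(e*e) = 1 := by
          calc (e*e)*(e*e) = (e*e)*(e*e)⁻¹ := by rw [← h2]
            _ = 1 := by group
        exact hz1 (by rw [← hd2, h3])
      exact core hG z hz1 hzz hzc huz ha' hd2 hc2' hnc'

/-- F4 : two commuting square roots of `z` agree up to `z`. -/
lemma f4 (z : G) (hzz : z * z = 1) (huz : ∀ w : G, w * w = 1 → w = 1 ∨ w = z)
    {g h : G} (hg : g*g = z) (hh : h*h = z) (hc : g*h = h*g) :
    h = g ∨ h = g*z := by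
  have hcc : h*g⁻¹ = g⁻¹*h := by
    calc h*g⁻¹ = g⁻¹*((g*h)*g⁻¹) := by group
      _ = g⁻¹*((h*g)*g⁻¹) := by rw [hc]
      _ = g⁻¹*h := by group
  have h1 : (g⁻¹*h)*(g⁻¹*h) = 1 := by
    calc (g⁻¹*h)*(g⁻¹*h) = g⁻¹*((h*g⁻¹)*h) := by group
      _ = g⁻¹*((g⁻¹*h)*h) := by rw [hcc]
      _ = (g*g)⁻¹*(h*h) := by group
      _ = z⁻¹*z := by rw [hg, hh]
      _ = 1 := by group
  rcases huz _ h1 with h2 | h2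
  · left
    calc h = g*(g⁻¹*h) := by group
      _ = g*1 := by rw [h2]
      _ = g := mul_one _
  · right
    calc h = g*(g⁻¹*h) := by group
      _ = g*z := by rw [h2]

/-- F1 : anything commuting with all of a maximal abelian subgroup lies in it. -/
lemma mem_of_commute_all (A : Subgroup G) (hA : IsMulCommutative A)
    (hmax : ∀ B : Subgroup G, IsMulCommutative B → A ≤ B → B = A)
    {u : G} (hu : ∀ v ∈ A, u*v = v*u) : u ∈ A := by
  haveI := hA
  set B : Subgroup G :=
    { carrier := {g | ∃ v ∈ A, ∃ n : ℤ, g = v * u^n}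
      one_mem' := ⟨1, A.one_mem, 0, by simp⟩
      mul_mem' := by
        rintro x y ⟨v, hv, n, rfl⟩ ⟨w, hw, k, rfl⟩
        refine ⟨v*w, A.mul_mem hv hw, n+k, ?_⟩
        have hcom : u^n * w = w * u^n := ((show Commute u w from hu w hw).zpow_left n).eq
        calc (v*u^n)*(w*u^k) = v*((u^n*w)*u^k) := by group
          _ = v*((w*u^n)*u^k) := by rw [hcom]
          _ = (v*w)*(u^n*u^k) := by group
          _ = (v*w)*u^(n+k) := by rw [← zpow_add]
      inv_mem' := by
        rintro x ⟨v, hv, n, rfl⟩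
        refine ⟨v⁻¹, A.inv_mem hv, -n, ?_⟩
        have hcom : u^(-n) * v⁻¹ = v⁻¹ * u^(-n) :=
          (((show Commute u v from hu v hv).zpow_left (-n)).inv_right).eq
        calc (v*u^n)⁻¹ = u^(-n) * v⁻¹ := by rw [zpow_neg]; group
          _ = v⁻¹*u^(-n) := hcom } with hB
  have hBcomm : IsMulCommutative B := by
    constructor; constructor
    rintro ⟨x, hx⟩ ⟨y, hy⟩
    obtain ⟨v, hv, n, rfl⟩ := hx
    obtain ⟨w, hw, k, rfl⟩ := hy
    apply Subtype.ext
    show (v*u^n)*(w*u^k) = (w*u^k)*(v*u^n)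
    have h1 : u^n*w = w*u^n := ((show Commute u w from hu w hw).zpow_left n).eq
    have h2 : u^k*v = v*u^k := ((show Commute u v from hu v hv).zpow_left k).eq
    have h3 : v*w = w*v := A.mul_comm_of_mem_isMulCommutative hv hw
    have h4 : u^n*u^k = u^k*u^n := by rw [← zpow_add, ← zpow_add, add_comm]
    calc (v*u^n)*(w*u^k) = v*((u^n*w)*u^k) := by group
      _ = v*((w*u^n)*u^k) := by rw [h1]
      _ = (v*w)*(u^n*u^k) := by group
      _ = (w*v)*(u^k*u^n) := by rw [h3, h4]
      _ = w*((v*u^k)*u^n) := by group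
      _ = w*((u^k*v)*u^n) := by rw [← h2]
      _ = (w*u^k)*(v*u^n) := by group
  have hAB : A ≤ B := by
    intro v hv
    exact ⟨v, hv, 0, by simp⟩
  have hBA : B = A := hmax B hBcomm hAB
  have huB : u ∈ B := ⟨1, A.one_mem, 1, by simp⟩
  rw [hBA] at huB
  exact huB

/-- every element whose square's square is `z` (i.e. of order 8) lies in `A`. -/
lemma ord8_mem (hG : IsPGroup 2 G) (z : G) (hz1 : z ≠ 1) (hzz : z * z = 1)
    (hzc : ∀ g : G, z * g = g * z)
    (huz : ∀ w : G, w * w = 1 → w = 1 ∨ w = z)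
    (A : Subgroup G) (hA : IsMulCommutative A)
    (hmax : ∀ B : Subgroup G, IsMulCommutative B → A ≤ B → B = A)
    {a : G} (haA : a ∈ A) (ha4 : (a*a)*(a*a) = z)
    (hzA : z ∈ A)
    {s : G} (hs : (s*s)*(s*s) = z) : s ∈ A := by
  have hcsq : (s*s)*(a*a) = (a*a)*(s*s) := sq4 hG z hz1 hzz hzc huz ha4 hs
  have hne : ((a*a)*(a*a)) ≠ 1 := by rw [ha4]; exact hz1
  rcases f4 z hzz huz ha4 hs hcsq.symm with h' | h'
  · -- s*s = a*a
    rcases keyE hG z hz1 hzz hzc huz (rfl : a*a = a*a) h' hne with h2 | h2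
    · rw [h2]; exact haA
    · rw [h2]; exact A.mul_mem haA hzA
  · -- s*s = (a*a)*z
    have hinv : a⁻¹*a⁻¹ = (a*a)*z := by
      have h3 : (a*a)*((a*a)*z) = 1 := by
        calc (a*a)*((a*a)*z) = ((a*a)*(a*a))*z := by group
          _ = z*z := by rw [ha4]
          _ = 1 := hzz
      calc a⁻¹*a⁻¹ = (a*a)⁻¹ := by group
        _ = (a*a)*z := inv_eq_of_mul_eq_one_right h3
    have hw2 : ((a*a)*z)*((a*a)*z) ≠ 1 := by
      have : ((a*a)*z)*((a*a)*z) = z := by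
        calc ((a*a)*z)*((a*a)*z) = (a*a)*((z*(a*a))*z) := by group
          _ = (a*a)*(((a*a)*z)*z) := by rw [hzc (a*a)]
          _ = ((a*a)*(a*a))*(z*z) := by group
          _ = z*1 := by rw [ha4, hzz]
          _ = z := mul_one _
      rw [this]; exact hz1
    rcases keyE hG z hz1 hzz hzc huz hinv h' hw2 with h2 | h2
    · rw [h2]; exact A.inv_mem haA
    · rw [h2]; exact A.mul_mem (A.inv_mem haA) hzA

/-- LC2 : two elements of `A` with the same 2-power "level" generate the same cyclic group. -/
lemma lc2 (hG : IsPGroup 2 G) (z : G) (hz1 : z ≠ 1) (hzz : z * z = 1)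
    (hzc : ∀ g : G, z * g = g * z)
    (huz : ∀ w : G, w * w = 1 → w = 1 ∨ w = z)
    (A : Subgroup G) (hA : IsMulCommutative A) :
    ∀ n : ℕ, 1 ≤ n → ∀ v w : G, v ∈ A → w ∈ A →
      v^((2:ℕ)^n) = z → w^((2:ℕ)^n) = z → ∃ t : ℤ, Odd t ∧ v = w^t := by
  haveI := hA
  intro n
  induction n with
  | zero => omega
  | succ k ih =>
    intro _ v w hvA hwA hv hw
    cases k with
    | zero =>
      -- base : v*v = z = w*w
      have hv2 : v*v = z := by rw [← pow_two]; simpa using hv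
      have hw2 : w*w = z := by rw [← pow_two]; simpa using hw
      have hcom : w*v = v*w := A.mul_comm_of_mem_isMulCommutative hwA hvA
      rcases f4 z hzz huz hw2 hv2 hcom with h' | h'
      · exact ⟨1, odd_one, by simpa using h'⟩
      · refine ⟨3, by decide, ?_⟩
        have h3 : w^(3:ℤ) = w*(w*w) := by
          rw [show (3:ℤ) = 1+1+1 from rfl, zpow_add, zpow_add, zpow_one]
          group
        rw [h', h3, hw2]
    | succ k' =>
      -- inductive step at level k'+2
      have hvsq : (v*v)^((2:ℕ)^(k'+1)) = z := by
        rw [← pow_two, ← pow_mul, ← pow_succ']; exact hv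
      have hwsq : (w*w)^((2:ℕ)^(k'+1)) = z := by
        rw [← pow_two, ← pow_mul, ← pow_succ']; exact hw
      obtain ⟨t, ht_odd, htv⟩ := ih (by omega) (v*v) (w*w)
        (A.mul_mem hvA hvA) (A.mul_mem hwA hwA) hvsq hwsq
      have hr : (w^t)*(w^t) = v*v := by
        have h1 : w^t * w^t = w^(2*t) := by rw [← zpow_add, two_mul]
        have h2 : (w*w)^t = w^(2*t) := by
          rw [show w*w = w^(2:ℤ) from by rw [show (2:ℤ) = 1+1 from rfl, zpow_add, zpow_one], ← zpow_mul]
        rw [h1, ← h2, ← htv]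
      have hne1 : (v*v)*(v*v) ≠ 1 := by
        intro hcon
        apply hz1
        have h4 : v^(4:ℕ) = 1 := by
          rw [show (4:ℕ) = 2+2 from rfl, pow_add, pow_two]
          exact hcon
        have : v^((2:ℕ)^(k'+2)) = 1 := by
          rw [show (2:ℕ)^(k'+2) = 4*2^k' from by ring, pow_mul, h4, one_pow]
        rw [← hv, this]
      rcases keyE hG z hz1 hzz hzc huz hr (rfl : v*v = v*v) hne1 with h' | h'
      · exact ⟨t, ht_odd, h'⟩
      · refine ⟨t + 2^(k'+2), ?_, ?_⟩
        · refine ht_odd.add_even ?_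
          refine ⟨(2:ℤ)^(k'+1), ?_⟩
          rw [← two_mul, ← pow_succ']
        · have hzc2 : w^((2:ℤ)^(k'+2)) = z := by
            rw [show ((2:ℤ)^(k'+2) : ℤ) = ((2^(k'+2) : ℕ) : ℤ) from by push_cast; ring,
              zpow_natCast]
            exact hw
          rw [zpow_add, hzc2]
          exact h'

/-- LT : every element commuting with `a*a` (the canonical order-4 element) lies in `A`. -/
lemma mem_of_commute_sq (hG : IsPGroup 2 G) (z : G) (hz1 : z ≠ 1) (hzz : z * z = 1)
    (hzc : ∀ g : G, z * g = g * z)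
    (huz : ∀ w : G, w * w = 1 → w = 1 ∨ w = z)
    (A : Subgroup G) (hA : IsMulCommutative A)
    (hmax : ∀ B : Subgroup G, IsMulCommutative B → A ≤ B → B = A)
    {a : G} (haA : a ∈ A) (ha4 : (a*a)*(a*a) = z) (hzA : z ∈ A) :
    ∀ k : ℕ, ∀ u : G, u^((2:ℕ)^k) = 1 → u*(a*a) = (a*a)*u → u ∈ A := by
  intro k
  induction k with
  | zero =>
    intro u hu _
    have : u = 1 := by simpa using hu
    rw [this]; exact A.one_mem
  | succ k ih =>
    intro u hu1 hcom
    by_cases h : u^((2:ℕ)^k) = 1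
    · exact ih u h hcom
    · have hO : u^((2:ℕ)^k) = z := by
        have h2 : (u^((2:ℕ)^k))*(u^((2:ℕ)^k)) = 1 := by
          rw [← pow_add, ← two_mul, ← pow_succ']; exact hu1
        exact (huz _ h2).resolve_left h
      cases k with
      | zero =>
        have hz' : u = z := by simpa using hO
        rw [hz']; exact hzA
      | succ k1 => cases k1 with
        | zero =>
          have hu2 : u*u = z := by
            rw [← pow_two]; simpa using hO
          rcases f4 z hzz huz ha4 hu2 hcom.symm with h' | h'
          · rw [h']; exact A.mul_mem haA haA
          · rw [h']; exact A.mul_mem (A.mul_mem haA haA) hzA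
        | succ k2 =>
          have husq1 : (u*u)^((2:ℕ)^(k2+2)) = 1 := by
            rw [← pow_two, ← pow_mul, ← pow_succ']; exact hu1
          have hcomsq : (u*u)*(a*a) = (a*a)*(u*u) := by
            calc (u*u)*(a*a) = u*(u*(a*a)) := by group
              _ = u*((a*a)*u) := by rw [hcom]
              _ = (u*(a*a))*u := by group
              _ = ((a*a)*u)*u := by rw [hcom]
              _ = (a*a)*(u*u) := by group
          have hu2A : u*u ∈ A := ih (u*u) husq1 hcomsq
          have hO2 : (u*u)^((2:ℕ)^(k2+1)) = z := by
            rw [← pow_two, ← pow_mul, ← pow_succ']; exact hO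
          have hu4 : (u*u)*(u*u) ≠ 1 := by
            intro hcon
            apply hz1
            have h4 : u^(4:ℕ) = 1 := by
              rw [show (4:ℕ) = 2+2 from rfl, pow_add, pow_two]; exact hcon
            have h5 : u^((2:ℕ)^(k2+2)) = 1 := by
              rw [show (2:ℕ)^(k2+2) = 4*2^k2 from by ring, pow_mul, h4, one_pow]
            rw [← hO, h5]
          by_cases hEx : ∃ w, w ∈ A ∧ w^((2:ℕ)^(k2+2)) = z
          · obtain ⟨w, hwA, hwO⟩ := hEx
            have hwsq : (w*w)^((2:ℕ)^(k2+1)) = z := by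
              rw [← pow_two, ← pow_mul, ← pow_succ']; exact hwO
            obtain ⟨t, ht_odd, htv⟩ := lc2 hG z hz1 hzz hzc huz A hA (k2+1) (by omega)
              (u*u) (w*w) hu2A (A.mul_mem hwA hwA) hO2 hwsq
            have hr : (w^t)*(w^t) = u*u := by
              have h1 : w^t * w^t = w^(2*t) := by rw [← zpow_add, two_mul]
              have h2 : (w*w)^t = w^(2*t) := by
                rw [show w*w = w^(2:ℤ) from by
                  rw [show (2:ℤ) = 1+1 from rfl, zpow_add, zpow_one], ← zpow_mul]
              rw [h1, ← h2, ← htv]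
            rcases keyE hG z hz1 hzz hzc huz hr (rfl : u*u = u*u) hu4 with h' | h'
            · rw [h']; exact A.zpow_mem hwA t
            · rw [h']; exact A.mul_mem (A.zpow_mem hwA t) hzA
          · push_neg at hEx
            apply mem_of_commute_all A hA hmax
            intro v hvA
            by_cases hv1 : v = 1
            · rw [hv1, one_mul, mul_one]
            obtain ⟨jv, hjv⟩ := pz hG z huz hv1
            have hjlt : jv < k2+2 := by
              by_contra hcon
              push_neg at hcon
              apply hEx (v^((2:ℕ)^(jv-(k2+2)))) (A.pow_mem hvA _)
              rw [← pow_mul, ← pow_add, show jv-(k2+2)+(k2+2) = jv from by omega]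
              exact hjv
            cases jv with
            | zero =>
              have hvz : v = z := by simpa using hjv
              rw [hvz]
              exact (hzc u).symm
            | succ j1 =>
              have hw' : ((u*u)^((2:ℕ)^((k2+1)-(j1+1))))^((2:ℕ)^(j1+1)) = z := by
                rw [← pow_mul, ← pow_add, show (k2+1)-(j1+1)+(j1+1) = k2+1 from by omega]
                exact hO2
              obtain ⟨t, ht_odd, htv⟩ := lc2 hG z hz1 hzz hzc huz A hA (j1+1) (by omega)
                v ((u*u)^((2:ℕ)^((k2+1)-(j1+1)))) hvA (A.pow_mem hu2A _) hjv hw'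
              have hcv : Commute u v := by
                rw [htv]
                exact (((Commute.refl u).mul_right (Commute.refl u)).pow_right _).zpow_right t
              exact hcv.eq

/-- ALL : every element with `u^4 ≠ 1` lies in `A`. -/
lemma mem_of_pow4_aux (hG : IsPGroup 2 G) (z : G) (hz1 : z ≠ 1) (hzz : z * z = 1)
    (hzc : ∀ g : G, z * g = g * z)
    (huz : ∀ w : G, w * w = 1 → w = 1 ∨ w = z)
    (A : Subgroup G) (hA : IsMulCommutative A)
    (hmax : ∀ B : Subgroup G, IsMulCommutative B → A ≤ B → B = A)
    {a : G} (haA : a ∈ A) (ha4 : (a*a)*(a*a) = z) (hzA : z ∈ A) :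
    ∀ k : ℕ, ∀ u : G, u^((2:ℕ)^k) = 1 → u^(4:ℕ) ≠ 1 → u ∈ A := by
  intro k
  induction k with
  | zero =>
    intro u hu h4
    exfalso; apply h4
    have : u = 1 := by simpa using hu
    rw [this]; simp
  | succ k ih =>
    intro u hu1 h4
    by_cases h : u^((2:ℕ)^k) = 1
    · exact ih u h h4
    · have hO : u^((2:ℕ)^k) = z := by
        have h2 : (u^((2:ℕ)^k))*(u^((2:ℕ)^k)) = 1 := by
          rw [← pow_add, ← two_mul, ← pow_succ']; exact hu1
        exact (huz _ h2).resolve_left h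
      cases k with
      | zero =>
        exfalso; apply h4
        have hvz : u = z := by simpa using hO
        rw [hvz, show (4:ℕ) = 2+2 from rfl, pow_add, pow_two, hzz]
        simp
      | succ k1 => cases k1 with
        | zero =>
          exfalso; apply h4
          have hu2 : u*u = z := by rw [← pow_two]; simpa using hO
          rw [show (4:ℕ) = 2+2 from rfl, pow_add, pow_two, hu2, hzz]
        | succ k2 =>
          have hs4 : ((u^((2:ℕ)^k2)) * (u^((2:ℕ)^k2))) * ((u^((2:ℕ)^k2)) * (u^((2:ℕ)^k2))) = z := by
            rw [← pow_add, ← two_mul, ← pow_succ', ← pow_add, ← two_mul, ← pow_succ']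
            exact hO
          have hcsq := sq4 hG z hz1 hzz hzc huz ha4 hs4
          have hcomp : Commute u ((u^((2:ℕ)^k2)) * (u^((2:ℕ)^k2))) :=
            ((Commute.refl u).pow_right _).mul_right ((Commute.refl u).pow_right _)
          rcases f4 z hzz huz ha4 hs4 hcsq.symm with h' | h'
          · have hcom : u*(a*a) = (a*a)*u := by
              rw [← h']
              exact hcomp.eq
            exact mem_of_commute_sq hG z hz1 hzz hzc huz A hA hmax haA ha4 hzA
              (k2+1+1+1) u hu1 hcom
          · have haa : a*a = ((u^((2:ℕ)^k2)) * (u^((2:ℕ)^k2)))*z := by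
              have hsz : ((a*a)*z)*z = a*a := by
                calc ((a*a)*z)*z = (a*a)*(z*z) := by group
                  _ = (a*a)*1 := by rw [hzz]
                  _ = a*a := mul_one _
              rw [← hsz, h']
            have hcom : u*(a*a) = (a*a)*u := by
              rw [haa]
              calc u*(((u^((2:ℕ)^k2)) * (u^((2:ℕ)^k2)))*z)
                  = (u*((u^((2:ℕ)^k2)) * (u^((2:ℕ)^k2))))*z := by group
                _ = (((u^((2:ℕ)^k2)) * (u^((2:ℕ)^k2)))*u)*z := by rw [hcomp.eq]
                _ = ((u^((2:ℕ)^k2)) * (u^((2:ℕ)^k2)))*(u*z) := by group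
                _ = ((u^((2:ℕ)^k2)) * (u^((2:ℕ)^k2)))*(z*u) := by rw [← hzc u]
                _ = (((u^((2:ℕ)^k2)) * (u^((2:ℕ)^k2)))*z)*u := by group
            exact mem_of_commute_sq hG z hz1 hzz hzc huz A hA hmax haA ha4 hzA
              (k2+1+1+1) u hu1 hcom

/-- finding an element of order 8 inside `A`. -/
lemma ord8_aux (z : G) (hzz : z*z = 1)
    (huz : ∀ w : G, w * w = 1 → w = 1 ∨ w = z) :
    ∀ k : ℕ, ∀ v : G, v^((2:ℕ)^k) = 1 → v^(4:ℕ) ≠ 1 →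
      ∃ n : ℕ, ((v^n)*(v^n))*((v^n)*(v^n)) = z := by
  intro k
  induction k with
  | zero =>
    intro v hv h4
    exfalso; apply h4
    have : v = 1 := by simpa using hv
    rw [this]; simp
  | succ k ih =>
    intro v hv h4
    by_cases h : v^((2:ℕ)^k) = 1
    · exact ih v h h4
    · have hO : v^((2:ℕ)^k) = z := by
        have h2 : (v^((2:ℕ)^k))*(v^((2:ℕ)^k)) = 1 := by
          rw [← pow_add, ← two_mul, ← pow_succ']; exact hv
        exact (huz _ h2).resolve_left h
      cases k with
      | zero =>
        exfalso; apply h4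
        have hvz : v = z := by simpa using hO
        rw [hvz, show (4:ℕ) = 2+2 from rfl, pow_add, pow_two, hzz]
        simp
      | succ k1 => cases k1 with
        | zero =>
          exfalso; apply h4
          have hv2 : v*v = z := by rw [← pow_two]; simpa using hO
          rw [show (4:ℕ) = 2+2 from rfl, pow_add, pow_two, hv2, hzz]
        | succ k2 =>
          refine ⟨2^k2, ?_⟩
          rw [← pow_add, ← two_mul, ← pow_succ', ← pow_add, ← two_mul, ← pow_succ']
          exact hO

lemma exists_a (hG : IsPGroup 2 G) (z : G) (hz1 : z ≠ 1) (hzz : z * z = 1)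
    (huz : ∀ w : G, w * w = 1 → w = 1 ∨ w = z)
    (A : Subgroup G) (hA : IsMulCommutative A)
    (hbig : 8 ≤ (A : Set G).encard) :
    ∃ a, a ∈ A ∧ (a*a)*(a*a) = z := by
  haveI := hA
  have hex : ∃ v, v ∈ A ∧ v^(4:ℕ) ≠ 1 := by
    by_contra hcon
    push_neg at hcon
    have hsub : ∀ v, v ∈ A → v*v = 1 ∨ v*v = z := by
      intro v hv
      apply huz
      have h1 := hcon v hv
      rw [show (4:ℕ) = 2+2 from rfl, pow_add, pow_two] at h1
      exact h1
    by_cases hw : ∃ w, w ∈ A ∧ w*w = z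
    · obtain ⟨w, hwA, hww⟩ := hw
      have hsub4 : (A : Set G) ⊆ {1, z, w, w*z} := by
        intro v hv
        rcases hsub v hv with h1 | h1
        · rcases huz v h1 with h2 | h2
          · left; exact h2
          · right; left; exact h2
        · have hcom : w*v = v*w := A.mul_comm_of_mem_isMulCommutative hwA hv
          rcases f4 z hzz huz hww h1 hcom with h2 | h2
          · right; right; left; exact h2
          · right; right; right; exact h2
      have hcard : ((A : Set G)).encard ≤ 4 := by
        refine le_trans (Set.encard_mono hsub4) ?_
        refine le_trans (Set.encard_insert_le _ _) ?_
        refine le_trans (add_le_add_left (Set.encard_insert_le _ _) 1) ?_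
        refine le_trans (add_le_add_left (add_le_add_left (Set.encard_insert_le _ _) 1) 1) ?_
        rw [Set.encard_singleton]
        norm_num
      have hle := le_trans hbig hcard
      norm_num at hle
    · push_neg at hw
      have hsub2 : (A : Set G) ⊆ {1, z} := by
        intro v hv
        rcases hsub v hv with h1 | h1
        · rcases huz v h1 with h2 | h2
          · left; exact h2
          · right; exact h2
        · exact absurd h1 (hw v hv)
      have hcard : ((A : Set G)).encard ≤ 2 := by
        refine le_trans (Set.encard_mono hsub2) ?_
        refine le_trans (Set.encard_insert_le _ _) ?_
        rw [Set.encard_singleton]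
        norm_num
      have hle := le_trans hbig hcard
      norm_num at hle
  obtain ⟨v, hvA, hv4⟩ := hex
  obtain ⟨k, hk⟩ := hG v
  obtain ⟨n, hn⟩ := ord8_aux z hzz huz k v hk hv4
  exact ⟨v^n, A.pow_mem hvA n, hn⟩

end Stmt12

/-- In an infinite non-abelian 2-group `G` with a unique element of order 2, if `A` is a
maximal abelian subgroup with at least 8 elements, then every element of `G` outside `A`
has order 4, and `A` is a normal subgroup of index 2. -/
theorem stmt_12 (G : Type*) [Group G] [Infinite G] (hG : IsPGroup 2 G)
    (hna : ∃ x y : G, x * y ≠ y * x) (huniq : ∃! x : G, orderOf x = 2)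
    (A : Subgroup G) (hA : IsMulCommutative A)
    (hmax : ∀ B : Subgroup G, IsMulCommutative B → A ≤ B → B = A)
    (hbig : 8 ≤ (A : Set G).encard) :
    (∀ x : G, x ∉ A → orderOf x = 4) ∧ A.Normal ∧ A.index = 2 := by
  classical
  haveI := hA
  obtain ⟨z, hz2, hzu⟩ := huniq
  have hz1 : z ≠ 1 := by
    intro h
    rw [h] at hz2
    simp at hz2
  have hzz : z*z = 1 := by
    have h := pow_orderOf_eq_one z
    rw [hz2, pow_two] at h
    exact h
  have huz : ∀ w : G, w*w = 1 → w = 1 ∨ w = z := by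
    intro w hw
    by_cases h1 : w = 1
    · exact Or.inl h1
    · right
      apply hzu
      have hdvd : orderOf w ∣ 2 := orderOf_dvd_of_pow_eq_one (by rw [pow_two]; exact hw)
      have hne : orderOf w ≠ 1 := by
        intro h; exact h1 (orderOf_eq_one_iff.mp h)
      rcases (Nat.Prime.eq_one_or_self_of_dvd Nat.prime_two _ hdvd) with h | h
      · exact absurd h hne
      · exact h
  have hzc : ∀ g : G, z * g = g * z := by
    intro g
    have h1 : (g*z*g⁻¹)*(g*z*g⁻¹) = 1 := by
      calc (g*z*g⁻¹)*(g*z*g⁻¹) = g*(z*z)*g⁻¹ := by group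
        _ = g*1*g⁻¹ := by rw [hzz]
        _ = 1 := by group
    rcases huz _ h1 with h2 | h2
    · exfalso
      apply hz1
      calc z = g⁻¹*((g*z*g⁻¹)*g) := by group
        _ = g⁻¹*(1*g) := by rw [h2]
        _ = 1 := by group
    · calc z*g = (g*z*g⁻¹)*g := by rw [h2]
        _ = g*z := by group
  obtain ⟨a, haA, ha4⟩ := Stmt12.exists_a hG z hz1 hzz huz A hA hbig
  have hzA : z ∈ A := Stmt12.mem_of_commute_all A hA hmax (fun v _ => (hzc v))
  have h1A : (1:G) ∈ A := A.one_mem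
  have hLT : ∀ u : G, u*(a*a) = (a*a)*u → u ∈ A := by
    intro u hu
    obtain ⟨k, hk⟩ := hG u
    exact Stmt12.mem_of_commute_sq hG z hz1 hzz hzc huz A hA hmax haA ha4 hzA k u hk hu
  have hALL : ∀ u : G, u^(4:ℕ) ≠ 1 → u ∈ A := by
    intro u h4
    obtain ⟨k, hk⟩ := hG u
    exact Stmt12.mem_of_pow4_aux hG z hz1 hzz hzc huz A hA hmax haA ha4 hzA k u hk h4
  have hout : ∀ x : G, x ∉ A → x*x = z := by
    intro x hx
    have hx4 : x^(4:ℕ) = 1 := by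
      by_contra h4
      exact hx (hALL x h4)
    have hx2 : (x*x)*(x*x) = 1 := by
      rw [show (4:ℕ) = 2+2 from rfl, pow_add, pow_two] at hx4
      exact hx4
    rcases huz _ hx2 with h1 | h1
    · exfalso
      rcases huz x h1 with h2 | h2
      · exact hx (h2 ▸ h1A)
      · exact hx (h2 ▸ hzA)
    · exact h1
  have hconj8 : ∀ g : G, (g*a*g⁻¹) ∈ A := by
    intro g
    apply Stmt12.ord8_mem hG z hz1 hzz hzc huz A hA hmax haA ha4 hzA
    calc ((g*a*g⁻¹)*(g*a*g⁻¹))*((g*a*g⁻¹)*(g*a*g⁻¹)) = g*((a*a)*(a*a))*g⁻¹ := by group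
      _ = g*z*g⁻¹ := by rw [ha4]
      _ = z := Stmt12.conj_self (hzc g).symm
  have hconjsq : ∀ g : G, g*(a*a)*g⁻¹ = (g*a*g⁻¹)*(g*a*g⁻¹) := by
    intro g; group
  have hNormal : A.Normal := by
    constructor
    intro v hv g
    by_cases hv4 : v^(4:ℕ) = 1
    · have hv2 : (v*v)*(v*v) = 1 := by
        rw [show (4:ℕ) = 2+2 from rfl, pow_add, pow_two] at hv4; exact hv4
      rcases huz _ hv2 with h1 | h1
      · rcases huz v h1 with h2 | h2
        · rw [h2]; simpa using h1A
        · rw [h2, Stmt12.conj_self (hzc g).symm]; exact hzA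
      · have hcom : (a*a)*v = v*(a*a) :=
          A.mul_comm_of_mem_isMulCommutative (A.mul_mem haA haA) hv
        rcases Stmt12.f4 z hzz huz ha4 h1 hcom with h2 | h2
        · rw [h2, hconjsq g]
          exact A.mul_mem (hconj8 g) (hconj8 g)
        · rw [h2]
          have hsplit : g*((a*a)*z)*g⁻¹ = (g*(a*a)*g⁻¹)*(g*z*g⁻¹) := by group
          rw [hsplit, Stmt12.conj_self (hzc g).symm, hconjsq g]
          exact A.mul_mem (A.mul_mem (hconj8 g) (hconj8 g)) hzA
    · have h4' : (g*v*g⁻¹)^(4:ℕ) ≠ 1 := by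
        intro hc
        apply hv4
        have h5 : (g*v*g⁻¹)^(4:ℕ) = g*v^(4:ℕ)*g⁻¹ := conj_pow
        rw [h5] at hc
        calc v^(4:ℕ) = g⁻¹*((g*v^(4:ℕ)*g⁻¹)*g) := by group
          _ = g⁻¹*(1*g) := by rw [hc]
          _ = 1 := by group
      exact hALL _ h4'
  have hiv' : (a*a)⁻¹ = (a*a)*z := inv_eq_of_mul_eq_one_right (by
    calc (a*a)*((a*a)*z) = ((a*a)*(a*a))*z := by group
      _ = z*z := by rw [ha4]
      _ = 1 := hzz)
  have hconj_i : ∀ x : G, x ∉ A → x*(a*a)*x⁻¹ = (a*a)*z := by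
    intro x hx
    have hs : x*(a*a)*x⁻¹ = (x*a*x⁻¹)*(x*a*x⁻¹) := hconjsq x
    have hs8 : ((x*a*x⁻¹)*(x*a*x⁻¹))*((x*a*x⁻¹)*(x*a*x⁻¹)) = z := by
      calc ((x*a*x⁻¹)*(x*a*x⁻¹))*((x*a*x⁻¹)*(x*a*x⁻¹)) = x*((a*a)*(a*a))*x⁻¹ := by group
        _ = x*z*x⁻¹ := by rw [ha4]
        _ = z := Stmt12.conj_self (hzc x).symm
    have hcsq := Stmt12.sq4 hG z hz1 hzz hzc huz ha4 hs8
    rcases Stmt12.f4 z hzz huz ha4 hs8 hcsq.symm with h' | h'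
    · exfalso
      apply hx
      apply hLT
      have h2 : x*(a*a)*x⁻¹ = a*a := by rw [hs, h']
      calc x*(a*a) = (x*(a*a)*x⁻¹)*x := by group
        _ = (a*a)*x := by rw [h2]
    · rw [hs, h']
  have hINV : ∀ x : G, x ∉ A → ∀ k : ℕ, ∀ v : G, v ∈ A → v^((2:ℕ)^k) = 1 →
      x*v*x⁻¹ = v⁻¹ := by
    intro x hx k
    induction k with
    | zero =>
      intro v _ hv1
      have hv' : v = 1 := by simpa using hv1
      rw [hv']; group
    | succ k ih =>
      intro v hvA hv1
      by_cases hv4 : v^(4:ℕ) = 1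
      · have hv2 : (v*v)*(v*v) = 1 := by
          rw [show (4:ℕ) = 2+2 from rfl, pow_add, pow_two] at hv4; exact hv4
        rcases huz _ hv2 with h1 | h1
        · rcases huz v h1 with h2 | h2
          · rw [h2]; group
          · rw [h2]
            have hzv : z⁻¹ = z := inv_eq_of_mul_eq_one_right hzz
            rw [Stmt12.conj_self (hzc x).symm, hzv]
        · have hcom : (a*a)*v = v*(a*a) :=
            A.mul_comm_of_mem_isMulCommutative (A.mul_mem haA haA) hvA
          rcases Stmt12.f4 z hzz huz ha4 h1 hcom with h2 | h2
          · rw [h2, hconj_i x hx, hiv']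
          · rw [h2]
            have hzv : z⁻¹ = z := inv_eq_of_mul_eq_one_right hzz
            have hL : x*((a*a)*z)*x⁻¹ = a*a := by
              calc x*((a*a)*z)*x⁻¹ = (x*(a*a)*x⁻¹)*(x*z*x⁻¹) := by group
                _ = ((a*a)*z)*(x*z*x⁻¹) := by rw [hconj_i x hx]
                _ = ((a*a)*z)*z := by rw [Stmt12.conj_self (hzc x).symm]
                _ = (a*a)*(z*z) := by group
                _ = (a*a)*1 := by rw [hzz]
                _ = a*a := mul_one _
            have hR : ((a*a)*z)⁻¹ = a*a := by
              calc ((a*a)*z)⁻¹ = z⁻¹*(a*a)⁻¹ := by group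
                _ = z*((a*a)*z) := by rw [hzv, hiv']
                _ = (z*(a*a))*z := by group
                _ = ((a*a)*z)*z := by rw [hzc (a*a)]
                _ = (a*a)*(z*z) := by group
                _ = (a*a)*1 := by rw [hzz]
                _ = a*a := mul_one _
            rw [hL, hR]
      · have hvv1 : (v*v)^((2:ℕ)^k) = 1 := by
          rw [← pow_two, ← pow_mul, ← pow_succ']; exact hv1
        have hww : (x*v*x⁻¹)*(x*v*x⁻¹) = v⁻¹*v⁻¹ := by
          calc (x*v*x⁻¹)*(x*v*x⁻¹) = x*(v*v)*x⁻¹ := by group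
            _ = (v*v)⁻¹ := ih (v*v) (A.mul_mem hvA hvA) hvv1
            _ = v⁻¹*v⁻¹ := by group
        have hwne : (v⁻¹*v⁻¹)*(v⁻¹*v⁻¹) ≠ 1 := by
          intro hcon
          apply hv4
          have hinv1 : (v^(4:ℕ))⁻¹ = 1 := by
            rw [show (4:ℕ) = 2+2 from rfl, pow_add, pow_two]
            calc ((v*v)*(v*v))⁻¹ = (v⁻¹*v⁻¹)*(v⁻¹*v⁻¹) := by group
              _ = 1 := hcon
          exact inv_eq_one.mp hinv1
        rcases Stmt12.keyE hG z hz1 hzz hzc huz (rfl : v⁻¹*v⁻¹ = v⁻¹*v⁻¹) hww hwne with h' | h'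
        · exact h'
        · exfalso
          have hx2 : x*x = z := hout x hx
          have hsq : (x*v)*(x*v) = 1 := by
            calc (x*v)*(x*v) = (x*v*x⁻¹)*((x*x)*v) := by group
              _ = (v⁻¹*z)*((x*x)*v) := by rw [h']
              _ = (v⁻¹*z)*(z*v) := by rw [hx2]
              _ = v⁻¹*((z*z)*v) := by group
              _ = v⁻¹*(1*v) := by rw [hzz]
              _ = 1 := by group
          rcases huz _ hsq with h2 | h2
          · apply hx
            have hxv : x = v⁻¹ := by
              calc x = (x*v)*v⁻¹ := by group
                _ = 1*v⁻¹ := by rw [h2]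
                _ = v⁻¹ := one_mul _
            rw [hxv]; exact A.inv_mem hvA
          · apply hx
            have hxv : x = z*v⁻¹ := by
              calc x = (x*v)*v⁻¹ := by group
                _ = z*v⁻¹ := by rw [h2]
            rw [hxv]; exact A.mul_mem hzA (A.inv_mem hvA)
  have hINV' : ∀ x : G, x ∉ A → ∀ v : G, v ∈ A → x*v*x⁻¹ = v⁻¹ := by
    intro x hx v hv
    obtain ⟨k, hk⟩ := hG v
    exact hINV x hx k v hv hk
  obtain ⟨x0, hx0⟩ : ∃ x0 : G, x0 ∉ A := by
    by_contra hcon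
    push_neg at hcon
    obtain ⟨x, y, hxy⟩ := hna
    exact hxy (A.mul_comm_of_mem_isMulCommutative (hcon x) (hcon y))
  refine ⟨?_, hNormal, ?_⟩
  · intro x hx
    have hx2 : x*x = z := hout x hx
    have hx4 : x^(4:ℕ) = 1 := by
      rw [show (4:ℕ) = 2+2 from rfl, pow_add, pow_two, hx2, hzz]
    have hx2ne : x^(2:ℕ) ≠ 1 := by
      rw [pow_two, hx2]; exact hz1
    have hxne : x ≠ 1 := fun h => hx (h ▸ h1A)
    have hdvd : orderOf x ∣ 4 := orderOf_dvd_of_pow_eq_one hx4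
    have hdvd2 : orderOf x ∣ 2^2 := by
      rw [show (2:ℕ)^2 = 4 from by norm_num]; exact hdvd
    obtain ⟨j, hjle, hj⟩ := (Nat.dvd_prime_pow Nat.prime_two).mp hdvd2
    interval_cases j
    · exfalso; rw [pow_zero] at hj; exact hxne (orderOf_eq_one_iff.mp hj)
    · exfalso
      apply hx2ne
      have hp := pow_orderOf_eq_one x
      rw [hj] at hp
      simpa using hp
    · rw [hj]; norm_num
  · rw [Subgroup.index_eq_two_iff]
    refine ⟨x0, fun b => ?_⟩
    by_cases hb : b ∈ A
    · refine Or.inr ⟨hb, ?_⟩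
      intro hbx
      apply hx0
      have hx0' : x0 = b⁻¹*(b*x0) := by group
      rw [hx0']
      exact A.mul_mem (A.inv_mem hb) hbx
    · refine Or.inl ⟨?_, hb⟩
      apply Stmt12.mem_of_commute_all A hA hmax
      intro v hv
      have h1 : x0*v*x0⁻¹ = v⁻¹ := hINV' x0 hx0 v hv
      have h2 : b*v⁻¹*b⁻¹ = v := by
        have h3 := hINV' b hb v⁻¹ (A.inv_mem hv)
        rw [inv_inv] at h3
        exact h3
      have hc : (b*x0)*v*(b*x0)⁻¹ = v := by
        calc (b*x0)*v*(b*x0)⁻¹ = b*(x0*v*x0⁻¹)*b⁻¹ := by group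
          _ = b*v⁻¹*b⁻¹ := by rw [h1]
          _ = v := h2
      calc (b*x0)*v = ((b*x0)*v*(b*x0)⁻¹)*(b*x0) := by group
        _ = v*(b*x0) := by rw [hc]
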